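/- For p, q > 1, the function x ↦ log(arcsin_{p,q}(e^x)), defined for x < 0, is convex. -/

import Mathlib

open Real Set

noncomputable def arcsinpq (p q x : ℝ) : ℝ :=
  ∫ t in (0:ℝ)..x, (1 - t ^ q) ^ (-1/p)

open MeasureTheory intervalIntegral

namespace Arcsin11

variable {p q : ℝ}

/-- continuity of the integrand on [0,c] for c < 1 -/
lemma contOn (hq : 0 < q) {c : ℝ} (hc1 : c < 1) :
    ContinuousOn (fun t : ℝ => (1 - t ^ q) ^ (-1/p)) (Icc 0 c) := by
  intro t ht
  have ht0 : 0 ≤ t := ht.1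
  have htq : t ^ q < 1 := by
    calc t ^ q ≤ c ^ q := Real.rpow_le_rpow ht0 ht.2 hq.le
    _ < 1 := by
        have hc0 : 0 ≤ c := le_trans ht0 ht.2
        rcases eq_or_lt_of_le hc0 with h|h
        · rw [← h, Real.zero_rpow hq.ne']; norm_num
        · exact Real.rpow_lt_one hc0 hc1 hq
  have h1 : (1:ℝ) - t ^ q ≠ 0 := by linarith
  apply ContinuousAt.continuousWithinAt
  apply ContinuousAt.comp (g := fun u : ℝ => u ^ (-1/p))
  · exact Real.continuousAt_rpow_const _ _ (Or.inl h1)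
  · exact (continuous_const.sub
      (Real.continuous_rpow_const hq.le)).continuousAt

lemma integrableOn (hq : 0 < q) {c : ℝ} (hc0 : 0 ≤ c) (hc1 : c < 1) :
    IntervalIntegrable (fun t : ℝ => (1 - t ^ q) ^ (-1/p)) volume 0 c := by
  apply ContinuousOn.intervalIntegrable
  rw [uIcc_of_le hc0]
  exact contOn hq hc1

lemma arcsin_pos (hq : 0 < q) {c : ℝ} (hc0 : 0 < c) (hc1 : c < 1) :
    0 < arcsinpq p q c := by
  apply intervalIntegral.intervalIntegral_pos_of_pos_on (integrableOn hq hc0.le hc1)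
  · intro t ht
    have : (0:ℝ) < 1 - t ^ q := by
      have : t ^ q < 1 := by
        calc t ^ q ≤ c ^ q := Real.rpow_le_rpow ht.1.le ht.2.le hq.le
        _ < 1 := Real.rpow_lt_one hc0.le hc1 hq
      linarith
    exact Real.rpow_pos_of_pos this _
  · exact hc0

/-- substitution t = c s -/
lemma subst (hq : 0 < q) {c : ℝ} (hc0 : 0 < c) :
    arcsinpq p q c = ∫ s in Ioc (0:ℝ) 1, c * (1 - (c * s) ^ q) ^ (-1/p) := by
  have h := intervalIntegral.smul_integral_comp_mul_left
    (a := (0:ℝ)) (b := 1) (fun t : ℝ => (1 - t ^ q) ^ (-1/p)) c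
  rw [mul_zero, mul_one] at h
  rw [arcsinpq, ← h, smul_eq_mul, ← intervalIntegral.integral_const_mul,
    intervalIntegral.integral_of_le zero_le_one]

end Arcsin11

open Arcsin11

theorem stmt11 (p q : ℝ) (hp : 1 < p) (hq : 1 < q) :
    ConvexOn ℝ (Iio (0:ℝ)) (fun x => Real.log (arcsinpq p q (Real.exp x))) := by
  have hq0 : 0 < q := lt_trans one_pos hq
  refine ⟨convex_Iio 0, ?_⟩
  intro x hx y hy a b ha hb hab
  simp only [smul_eq_mul]
  rcases eq_or_lt_of_le ha with h0|ha'
  · have hb1 : b = 1 := by linarith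
    rw [← h0, hb1]; simp
  rcases eq_or_lt_of_le hb with h0|hb'
  · have ha1 : a = 1 := by linarith
    rw [← h0, ha1]; simp
  -- main case: 0 < a, 0 < b
  set cx := Real.exp x with hcx
  set cy := Real.exp y with hcy
  set z := a * x + b * y with hz
  have hxneg : x < 0 := hx
  have hyneg : y < 0 := hy
  have hzneg : z < 0 := by
    have h1 : a * x < 0 := mul_neg_of_pos_of_neg ha' hxneg
    have h2 : b * y < 0 := mul_neg_of_pos_of_neg hb' hyneg
    linarith
  set cz := Real.exp z with hcz
  have hcx0 : 0 < cx := Real.exp_pos x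
  have hcy0 : 0 < cy := Real.exp_pos y
  have hcz0 : 0 < cz := Real.exp_pos z
  have hcx1 : cx < 1 := Real.exp_lt_one_iff.mpr hxneg
  have hcy1 : cy < 1 := Real.exp_lt_one_iff.mpr hyneg
  have hcz1 : cz < 1 := Real.exp_lt_one_iff.mpr hzneg
  have hczeq : cz = cx ^ a * cy ^ b := by
    rw [hcz, hcx, hcy, ← Real.exp_mul, ← Real.exp_mul, ← Real.exp_add, hz,
      mul_comm x a, mul_comm y b]
  -- the three integrands
  set u : ℝ → ℝ := fun s => cx * (1 - (cx * s) ^ q) ^ (-1/p) with hu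
  set v : ℝ → ℝ := fun s => cy * (1 - (cy * s) ^ q) ^ (-1/p) with hv
  set w : ℝ → ℝ := fun s => cz * (1 - (cz * s) ^ q) ^ (-1/p) with hw
  -- nonnegativity / positivity facts on (0,1]
  have upos : ∀ c : ℝ, 0 < c → c < 1 → ∀ s ∈ Ioc (0:ℝ) 1,
      0 < 1 - (c * s) ^ q := by
    intro c hc0 hc1 s hs
    have h1 : 0 < c * s := mul_pos hc0 hs.1
    have h2 : c * s < 1 := by
      calc c * s ≤ c * 1 := by nlinarith [hs.2]
      _ < 1 := by linarith
    have := Real.rpow_lt_one h1.le h2 hq0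
    linarith
  -- pointwise log-convexity
  have pointwise : ∀ s ∈ Ioc (0:ℝ) 1, w s ≤ u s ^ a * v s ^ b := by
    intro s hs
    have hs0 : 0 < s := hs.1
    have hA := upos cx hcx0 hcx1 s hs
    have hB := upos cy hcy0 hcy1 s hs
    have hC := upos cz hcz0 hcz1 s hs
    set A := (cx * s) ^ q with hA'
    set B := (cy * s) ^ q with hB'
    -- (cz*s)^q ≤ a*A + b*B, by convexity of exp
    have hsq : 0 < s ^ q := Real.rpow_pos_of_pos hs0 q
    have key1 : (cz * s) ^ q ≤ a * A + b * B := by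
      have e1 : ∀ t : ℝ, (Real.exp t * s) ^ q = Real.exp (q * t + Real.log (s ^ q)) := by
        intro t
        rw [Real.mul_rpow (Real.exp_pos t).le hs0.le, ← Real.exp_mul, Real.exp_add,
          Real.exp_log hsq, mul_comm t q]
      have hcon := convexOn_exp.2 (Set.mem_univ (q * x + Real.log (s ^ q)))
        (Set.mem_univ (q * y + Real.log (s ^ q))) ha hb hab
      simp only [smul_eq_mul] at hcon
      have e2 : a * (q * x + Real.log (s ^ q)) + b * (q * y + Real.log (s ^ q))
          = q * z + Real.log (s ^ q) := by
        rw [hz]; linear_combination Real.log (s ^ q) * hab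
      rw [hA', hB', hcx, hcy, e1 x, e1 y]
      calc (cz * s) ^ q = Real.exp (q * z + Real.log (s ^ q)) := by rw [hcz, e1 z]
      _ ≤ a * Real.exp (q * x + Real.log (s ^ q)) + b * Real.exp (q * y + Real.log (s ^ q)) := by
          rw [← e2]; exact hcon
    -- AM-GM
    have key2 : (1 - A) ^ a * (1 - B) ^ b ≤ 1 - (cz * s) ^ q := by
      calc (1 - A) ^ a * (1 - B) ^ b ≤ a * (1 - A) + b * (1 - B) :=
        Real.geom_mean_le_arith_mean2_weighted ha hb hA.le hB.le hab
      _ = 1 - (a * A + b * B) := by linear_combination hab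
      _ ≤ 1 - (cz * s) ^ q := by linarith
    have hprod : 0 < (1 - A) ^ a * (1 - B) ^ b :=
      mul_pos (Real.rpow_pos_of_pos hA _) (Real.rpow_pos_of_pos hB _)
    have hpneg : -1/p ≤ 0 := by
      have : 0 < p := lt_trans one_pos hp
      rw [neg_div]; simp [le_of_lt, div_pos, this]
    have key3 : (1 - (cz * s) ^ q) ^ (-1/p)
        ≤ ((1 - A) ^ (-1/p)) ^ a * ((1 - B) ^ (-1/p)) ^ b := by
      calc (1 - (cz * s) ^ q) ^ (-1/p) ≤ ((1 - A) ^ a * (1 - B) ^ b) ^ (-1/p) :=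
        Real.rpow_le_rpow_of_nonpos hprod key2 hpneg
      _ = ((1 - A) ^ (-1/p)) ^ a * ((1 - B) ^ (-1/p)) ^ b := by
          rw [Real.mul_rpow (Real.rpow_pos_of_pos hA _).le (Real.rpow_pos_of_pos hB _).le,
            ← Real.rpow_mul (by linarith), ← Real.rpow_mul (by linarith),
            mul_comm a (-1/p), mul_comm b (-1/p),
            Real.rpow_mul (by linarith), Real.rpow_mul (by linarith)]
    -- combine with the prefactor
    have hru : 0 < (1 - A) ^ (-1/p) := Real.rpow_pos_of_pos hA _
    have hrv : 0 < (1 - B) ^ (-1/p) := Real.rpow_pos_of_pos hB _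
    calc w s = (cx ^ a * cy ^ b) * (1 - (cz * s) ^ q) ^ (-1/p) := by rw [hw, hczeq]
    _ ≤ (cx ^ a * cy ^ b) * (((1 - A) ^ (-1/p)) ^ a * ((1 - B) ^ (-1/p)) ^ b) := by
        apply mul_le_mul_of_nonneg_left key3
        positivity
    _ = u s ^ a * v s ^ b := by
        rw [hu, hv]
        show (cx ^ a * cy ^ b) * (((1 - A) ^ (-1/p)) ^ a * ((1 - B) ^ (-1/p)) ^ b)
          = (cx * (1 - A) ^ (-1/p)) ^ a * (cy * (1 - B) ^ (-1/p)) ^ b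
        simp only [Real.mul_rpow hcx0.le hru.le, Real.mul_rpow hcy0.le hrv.le]
        ring
  -- continuity of the factors
  have contFac : ∀ c : ℝ, 0 < c → c < 1 →
      ContinuousOn (fun s : ℝ => c * (1 - (c * s) ^ q) ^ (-1/p)) (Icc (0:ℝ) 1) := by
    intro c hc0 hc1
    apply ContinuousOn.mul continuousOn_const
    apply (contOn hq0 hc1).comp (continuous_mul_left c).continuousOn
    intro s hs
    simp only [Set.mem_Icc]
    constructor
    · exact mul_nonneg hc0.le hs.1
    · have := mul_le_mul_of_nonneg_left hs.2 hc0.le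
      linarith
  have int_u : IntegrableOn u (Ioc (0:ℝ) 1) :=
    ((contFac cx hcx0 hcx1).integrableOn_Icc).mono_set Ioc_subset_Icc_self
  have int_v : IntegrableOn v (Ioc (0:ℝ) 1) :=
    ((contFac cy hcy0 hcy1).integrableOn_Icc).mono_set Ioc_subset_Icc_self
  have int_w : IntegrableOn w (Ioc (0:ℝ) 1) :=
    ((contFac cz hcz0 hcz1).integrableOn_Icc).mono_set Ioc_subset_Icc_self
  have cont_prod : ContinuousOn (fun s => u s ^ a * v s ^ b) (Icc (0:ℝ) 1) := by
    apply ContinuousOn.mul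
    · exact (contFac cx hcx0 hcx1).rpow_const (fun s _ => Or.inr ha)
    · exact (contFac cy hcy0 hcy1).rpow_const (fun s _ => Or.inr hb)
  have int_prod : IntegrableOn (fun s => u s ^ a * v s ^ b) (Ioc (0:ℝ) 1) :=
    (cont_prod.integrableOn_Icc).mono_set Ioc_subset_Icc_self
  haveI : IsFiniteMeasure (volume.restrict (Ioc (0:ℝ) 1)) := by
    constructor
    rw [Measure.restrict_apply_univ, Real.volume_Ioc]
    exact ENNReal.ofReal_lt_top
  -- nonnegativity
  have unonneg : ∀ c : ℝ, 0 < c → c < 1 → ∀ s ∈ Ioc (0:ℝ) 1,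
      0 ≤ c * (1 - (c * s) ^ q) ^ (-1/p) := by
    intro c hc0 hc1 s hs
    have := upos c hc0 hc1 s hs
    positivity
  -- MemLp facts
  have memlp : ∀ c e : ℝ, 0 < c → c < 1 → 0 < e →
      MemLp (fun s => (c * (1 - (c * s) ^ q) ^ (-1/p)) ^ e) (ENNReal.ofReal (1/e))
        (volume.restrict (Ioc (0:ℝ) 1)) := by
    intro c e hc0 hc1 he
    have hcont : ContinuousOn (fun s : ℝ => (c * (1 - (c * s) ^ q) ^ (-1/p)) ^ e)
        (Icc (0:ℝ) 1) := (contFac c hc0 hc1).rpow_const (fun s _ => Or.inr he.le)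
    apply MemLp.of_bound
      (((hcont.mono Ioc_subset_Icc_self)).aestronglyMeasurable measurableSet_Ioc)
      ((c * (1 - c ^ q) ^ (-1/p)) ^ e)
    rw [ae_restrict_iff' measurableSet_Ioc]
    apply ae_of_all
    intro s hs
    have h1 : 0 < 1 - (c * s) ^ q := upos c hc0 hc1 s hs
    have h2 : (c * s) ^ q ≤ c ^ q := by
      have hcs : c * s ≤ c := by
        have := mul_le_mul_of_nonneg_left hs.2 hc0.le
        linarith
      exact Real.rpow_le_rpow (mul_nonneg hc0.le hs.1.le) hcs hq0.le
    have h3 : 0 < 1 - c ^ q := by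
      have := Real.rpow_lt_one hc0.le hc1 hq0; linarith
    have hpneg : -1/p ≤ 0 := by
      have hp0 : 0 < p := lt_trans one_pos hp
      rw [neg_div]; simp [le_of_lt, div_pos, hp0]
    have h4 : (1 - (c * s) ^ q) ^ (-1/p) ≤ (1 - c ^ q) ^ (-1/p) :=
      Real.rpow_le_rpow_of_nonpos h3 (by linarith) hpneg
    have h5 : c * (1 - (c * s) ^ q) ^ (-1/p) ≤ c * (1 - c ^ q) ^ (-1/p) :=
      mul_le_mul_of_nonneg_left h4 hc0.le
    have h6 : (0:ℝ) ≤ c * (1 - (c * s) ^ q) ^ (-1/p) := by positivity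
    rw [Real.norm_of_nonneg (Real.rpow_nonneg h6 _)]
    exact Real.rpow_le_rpow h6 h5 he.le
  -- Hölder's inequality
  have hconj : (1/a).HolderConjugate (1/b) := Real.holderConjugate_one_div ha' hb' hab
  have hf_nonneg : 0 ≤ᵐ[volume.restrict (Ioc (0:ℝ) 1)] fun s => u s ^ a := by
    filter_upwards [ae_restrict_mem measurableSet_Ioc] with s hs
    exact Real.rpow_nonneg (unonneg cx hcx0 hcx1 s hs) a
  have hg_nonneg : 0 ≤ᵐ[volume.restrict (Ioc (0:ℝ) 1)] fun s => v s ^ b := by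
    filter_upwards [ae_restrict_mem measurableSet_Ioc] with s hs
    exact Real.rpow_nonneg (unonneg cy hcy0 hcy1 s hs) b
  have holder := MeasureTheory.integral_mul_le_Lp_mul_Lq_of_nonneg hconj hf_nonneg hg_nonneg
    (memlp cx a hcx0 hcx1 ha') (memlp cy b hcy0 hcy1 hb')
  have hI1 : (∫ s in Ioc (0:ℝ) 1, (u s ^ a) ^ (1/a)) = ∫ s in Ioc (0:ℝ) 1, u s := by
    apply setIntegral_congr_fun measurableSet_Ioc
    intro s hs
    show (u s ^ a) ^ (1/a) = u s
    have hus : 0 ≤ u s := unonneg cx hcx0 hcx1 s hs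
    rw [← Real.rpow_mul hus, mul_one_div_cancel ha'.ne', Real.rpow_one]
  have hI2 : (∫ s in Ioc (0:ℝ) 1, (v s ^ b) ^ (1/b)) = ∫ s in Ioc (0:ℝ) 1, v s := by
    apply setIntegral_congr_fun measurableSet_Ioc
    intro s hs
    show (v s ^ b) ^ (1/b) = v s
    have hvs : 0 ≤ v s := unonneg cy hcy0 hcy1 s hs
    rw [← Real.rpow_mul hvs, mul_one_div_cancel hb'.ne', Real.rpow_one]
  beta_reduce at holder
  rw [hI1, hI2, one_div_one_div, one_div_one_div] at holder
  have subz := subst (p:=p) hq0 hcz0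
  have subx := subst (p:=p) hq0 hcx0
  have suby := subst (p:=p) hq0 hcy0
  have main : arcsinpq p q cz ≤ (arcsinpq p q cx) ^ a * (arcsinpq p q cy) ^ b := by
    rw [subx, suby, subz]
    calc (∫ s in Ioc (0:ℝ) 1, cz * (1 - (cz * s) ^ q) ^ (-1/p))
        ≤ ∫ s in Ioc (0:ℝ) 1, u s ^ a * v s ^ b :=
          setIntegral_mono_on int_w int_prod measurableSet_Ioc pointwise
    _ ≤ (∫ s in Ioc (0:ℝ) 1, u s) ^ a * (∫ s in Ioc (0:ℝ) 1, v s) ^ b := holder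
  have Gzpos := arcsin_pos (p:=p) hq0 hcz0 hcz1
  have Gxpos := arcsin_pos (p:=p) hq0 hcx0 hcx1
  have Gypos := arcsin_pos (p:=p) hq0 hcy0 hcy1
  have hrhs : 0 < (arcsinpq p q cx) ^ a * (arcsinpq p q cy) ^ b :=
    mul_pos (Real.rpow_pos_of_pos Gxpos a) (Real.rpow_pos_of_pos Gypos b)
  calc Real.log (arcsinpq p q cz)
      ≤ Real.log ((arcsinpq p q cx) ^ a * (arcsinpq p q cy) ^ b) :=
        (Real.log_le_log_iff Gzpos hrhs).mpr main
  _ = a * Real.log (arcsinpq p q cx) + b * Real.log (arcsinpq p q cy) := by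
      rw [Real.log_mul (Real.rpow_pos_of_pos Gxpos a).ne' (Real.rpow_pos_of_pos Gypos b).ne',
        Real.log_rpow Gxpos, Real.log_rpow Gypos]
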